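/- For any integers g ≥ 3, d ≥ 2 and any even integer n ≥ 4d^g, there exists an n-vertex d-regular graph with girth at least g. -/

import Mathlib

set_option linter.unusedSectionVars false
set_option maxHeartbeats 1000000

noncomputable section ErdosSachsConstruction

open SimpleGraph Finset
open scoped Classical

variable {V : Type*} [Fintype V] [DecidableEq V]
def GirthGE (G : SimpleGraph V) (g : ℕ) : Prop :=
  ∀ ⦃a : V⦄ (c : G.Walk a a), c.IsCycle → g ≤ c.length

lemma Walk.length_rotate' {G : SimpleGraph V} {a u : V} (c : G.Walk a a)
    (h : u ∈ c.support) : (c.rotate u h).length = c.length := by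
  have := congr_arg SimpleGraph.Walk.length (c.take_spec h)
  rw [SimpleGraph.Walk.length_append] at this
  unfold SimpleGraph.Walk.rotate
  rw [SimpleGraph.Walk.length_append]
  omega

lemma edges_sub_of_avoid {H : SimpleGraph V} {u v x y : V}
    (p : (H ⊔ fromEdgeSet {s(u,v)}).Walk x y) (hp : s(u,v) ∉ p.edges) :
    ∀ e ∈ p.edges, e ∈ H.edgeSet := by
    intro e he
    have h2 := p.edges_subset_edgeSet he
    rw [SimpleGraph.edgeSet_sup, SimpleGraph.edgeSet_fromEdgeSet] at h2
    rcases h2 with h2 | h2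
    · exact h2
    · exfalso
      apply hp
      have := h2.1
      simp only [Set.mem_singleton_iff] at this
      rwa [this] at he

/-- Transfer a walk down to a subgraph when it avoids the extra edge. -/
lemma exists_walk_of_avoid {H : SimpleGraph V} {u v x y : V}
    (p : (H ⊔ fromEdgeSet {s(u,v)}).Walk x y) (hp : s(u,v) ∉ p.edges) :
    ∃ q : H.Walk x y, q.length = p.length ∧ q.edges = p.edges :=
  ⟨p.transfer H (edges_sub_of_avoid p hp), p.length_transfer _, p.edges_transfer _⟩

/-- Adding one edge between vertices with no short trail keeps all cycles long. -/
lemma girthGE_addEdge {H : SimpleGraph V} {u v : V} {g : ℕ}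
    (hG : GirthGE H g)
    (htrail : ∀ (p : H.Walk u v), p.edges.Nodup → g ≤ p.length + 1) :
    GirthGE (H ⊔ fromEdgeSet {s(u,v)}) g := by
  intro a c hc
  by_cases he : s(u,v) ∈ c.edges
  · have hu : u ∈ c.support := c.fst_mem_support_of_mem_edges he
    set c' := c.rotate u hu with hc'def
    have hcyc' : c'.IsCycle := hc.rotate hu
    have hlen : c'.length = c.length := Walk.length_rotate' c hu
    have he' : s(u,v) ∈ c'.edges := by
      rw [(c.rotate_edges u hu).perm.mem_iff]; exact he
    have hv : v ∈ c'.support := c'.snd_mem_support_of_mem_edges he'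
    set q1 := c'.takeUntil v hv with hq1
    set q2 := c'.dropUntil v hv with hq2
    have hspec : q1.append q2 = c' := c'.take_spec hv
    have hlen2 : q1.length + q2.length = c'.length := by
      have := congr_arg SimpleGraph.Walk.length hspec
      rwa [SimpleGraph.Walk.length_append] at this
    have hedges : q1.edges ++ q2.edges = c'.edges := by
      have := congr_arg SimpleGraph.Walk.edges hspec
      rwa [SimpleGraph.Walk.edges_append] at this
    have hnodup : (q1.edges ++ q2.edges).Nodup := by
      rw [hedges]; exact hcyc'.edges_nodup
    rw [List.nodup_append] at hnodup
    have he'' : s(u,v) ∈ q1.edges ++ q2.edges := by rw [hedges]; exact he'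
    rw [List.mem_append] at he''
    rcases he'' with h1 | h2
    · -- in q1 : Walk u v ; q2 : Walk v u avoids it
      have hq2avoid : s(u,v) ∉ q2.edges := fun h => hnodup.2.2 _ h1 _ h rfl
      obtain ⟨q, hqlen, hqedges⟩ := exists_walk_of_avoid q2 hq2avoid
      have := htrail q.reverse (by
        rw [SimpleGraph.Walk.edges_reverse]
        exact (List.nodup_reverse).mpr (hqedges ▸ hnodup.2.1))
      rw [SimpleGraph.Walk.length_reverse] at this
      have hq1pos : 1 ≤ q1.length := by
        have : q1.edges ≠ [] := List.ne_nil_of_mem h1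
        have hl := q1.length_edges
        rcases Nat.eq_zero_or_pos q1.length with h0 | h0
        · exfalso; apply this; rw [← List.length_eq_zero_iff, hl]; exact h0
        · exact h0
      omega
    · have hq1avoid : s(u,v) ∉ q1.edges := fun h => hnodup.2.2 _ h _ h2 rfl
      obtain ⟨q, hqlen, hqedges⟩ := exists_walk_of_avoid q1 hq1avoid
      have := htrail q (hqedges ▸ hnodup.1)
      have hq2pos : 1 ≤ q2.length := by
        have hne : q2.edges ≠ [] := List.ne_nil_of_mem h2
        have hl := q2.length_edges
        rcases Nat.eq_zero_or_pos q2.length with h0 | h0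
        · exfalso; apply hne; rw [← List.length_eq_zero_iff, hl]; exact h0
        · exact h0
      omega
  · have hsub := edges_sub_of_avoid c he
    have := hG (c.transfer H hsub) (hc.transfer hsub)
    rwa [c.length_transfer hsub] at this
/-- Instance-free neighborhood. -/
def nbr (G : SimpleGraph V) (v : V) : Finset V := univ.filter (fun w => G.Adj v w)

/-- Instance-free degree. -/
def ndeg (G : SimpleGraph V) (v : V) : ℕ := (nbr G v).card

lemma mem_nbr {G : SimpleGraph V} {v w : V} : w ∈ nbr G v ↔ G.Adj v w := by
  simp [nbr]

lemma ndeg_eq_degree (G : SimpleGraph V) (v : V) [Fintype (G.neighborSet v)] :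
    G.degree v = ndeg G v := by
  rw [SimpleGraph.degree, ndeg, nbr, SimpleGraph.neighborFinset_def, Set.toFinset_card,
    ← Fintype.card_subtype]
  exact Fintype.card_congr (Equiv.subtypeEquivRight (fun _ => Iff.rfl))

def gball (G : SimpleGraph V) (u : V) : ℕ → Finset V
  | 0 => {u}
  | (i+1) => gball G u i ∪ (gball G u i).biUnion (fun w => nbr G w)

lemma gball_subset_succ (G : SimpleGraph V) (u : V) (i : ℕ) :
    gball G u i ⊆ gball G u (i+1) := by
  rw [gball]; exact subset_union_left

lemma gball_mono (G : SimpleGraph V) (u : V) {i j : ℕ} (h : i ≤ j) :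
    gball G u i ⊆ gball G u j := by
  induction j with
  | zero => simpa [Nat.le_zero.mp h]
  | succ j ih =>
    rcases Nat.lt_or_ge i (j+1) with h' | h'
    · exact (ih (by omega)).trans (gball_subset_succ G u j)
    · have : i = j + 1 := by omega
      subst this; exact subset_rfl

lemma center_mem_gball (G : SimpleGraph V) (u : V) (i : ℕ) : u ∈ gball G u i :=
  gball_mono G u (Nat.zero_le i) (by simp [gball])

lemma adj_mem_gball {G : SimpleGraph V} {u x y : V} {i : ℕ}
    (hx : x ∈ gball G u i) (hadj : G.Adj x y) : y ∈ gball G u (i+1) := by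
  rw [gball]
  exact mem_union_right _ (mem_biUnion.mpr ⟨x, hx, mem_nbr.mpr hadj⟩)

lemma end_mem_gball {G : SimpleGraph V} {u y : V} (p : G.Walk y u) :
    y ∈ gball G u p.length := by
  induction p with
  | nil => simp [gball]
  | cons h q ih => exact adj_mem_gball ih h.symm

lemma end_mem_gball' {G : SimpleGraph V} {u y : V} (p : G.Walk u y) {r : ℕ}
    (h : p.length ≤ r) : y ∈ gball G u r := by
  have := end_mem_gball p.reverse
  rw [SimpleGraph.Walk.length_reverse] at this
  exact gball_mono G u h this

lemma card_gball_le {G : SimpleGraph V} {D : ℕ} (hD : ∀ v, ndeg G v ≤ D)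
    (u : V) (r : ℕ) : (gball G u r).card ≤ ∑ i ∈ range (r+1), D^i := by
  have sphere_sub : ∀ i : ℕ,
      (gball G u (i+1) \ gball G u i) ⊆
        (if i = 0 then ({u} : Finset V) else gball G u i \ gball G u (i-1)).biUnion
          (fun w => nbr G w) := by
    intro i w hw
    rw [mem_sdiff] at hw
    obtain ⟨hw1, hw2⟩ := hw
    rw [gball] at hw1
    rcases mem_union.mp hw1 with h | h
    · exact absurd h hw2
    · obtain ⟨z, hz, hwz⟩ := mem_biUnion.mp h
      refine mem_biUnion.mpr ⟨z, ?_, hwz⟩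
      rcases Nat.eq_zero_or_pos i with h0 | h0
      · subst h0; simpa [gball] using hz
      · rw [if_neg (by omega)]
        rw [mem_sdiff]
        refine ⟨hz, fun hzin => hw2 ?_⟩
        have : w ∈ (gball G u (i-1)).biUnion (fun w => nbr G w) :=
          mem_biUnion.mpr ⟨z, hzin, hwz⟩
        have h2 : w ∈ gball G u (i-1+1) := by rw [gball]; exact mem_union_right _ this
        rwa [Nat.sub_add_cancel h0] at h2
  have sphere_card : ∀ i : ℕ,
      (if i = 0 then ({u} : Finset V) else gball G u i \ gball G u (i-1)).card ≤ D ^ i := by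
    intro i
    induction i with
    | zero => simp
    | succ i ih =>
      rw [if_neg (by omega)]
      simp only [Nat.add_sub_cancel]
      calc (gball G u (i+1) \ gball G u i).card
          ≤ _ := card_le_card (sphere_sub i)
        _ ≤ _ := card_biUnion_le_card_mul _ _ D (fun w _ => hD w)
        _ ≤ D ^ i * D := Nat.mul_le_mul_right D ih
        _ = D ^ (i+1) := by ring
  induction r with
  | zero => simp [gball]
  | succ r ih =>
    have : gball G u (r+1) ⊆ gball G u r ∪ (gball G u (r+1) \ gball G u r) := by
      intro w hw
      by_cases h : w ∈ gball G u r
      · exact mem_union_left _ h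
      · exact mem_union_right _ (mem_sdiff.mpr ⟨hw, h⟩)
    calc (gball G u (r+1)).card ≤ _ := card_le_card this
      _ ≤ (gball G u r).card + (gball G u (r+1) \ gball G u r).card := card_union_le _ _
      _ ≤ (∑ i ∈ range (r+1), D^i) + D^(r+1) := by
          have h2 := sphere_card (r+1)
          rw [if_neg (by omega)] at h2
          simp only [Nat.add_sub_cancel] at h2
          exact Nat.add_le_add ih h2
      _ = ∑ i ∈ range (r+2), D^i := by
          rw [Finset.sum_range_succ (n := r+1)]

lemma geom_lt' {D : ℕ} (hD : 2 ≤ D) (k : ℕ) : ∑ i ∈ range k, D^i < D^k := by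
  induction k with
  | zero => simp
  | succ k ih =>
    rw [Finset.sum_range_succ, pow_succ]
    have : D ^ k * 2 ≤ D ^ k * D := Nat.mul_le_mul_left _ hD
    omega
lemma adj_addEdge {H : SimpleGraph V} {u v x y : V} :
    (H ⊔ fromEdgeSet {s(u,v)}).Adj x y ↔ H.Adj x y ∨ (s(x,y) = s(u,v) ∧ x ≠ y) := by
  simp [SimpleGraph.sup_adj, SimpleGraph.fromEdgeSet_adj]

lemma ndeg_addEdge {H : SimpleGraph V} {u v : V} (hne : u ≠ v) (hnadj : ¬ H.Adj u v) (w : V) :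
    ndeg (H ⊔ fromEdgeSet {s(u,v)}) w =
      if w = u ∨ w = v then ndeg H w + 1 else ndeg H w := by
  by_cases hw : w = u
  · subst hw
    rw [if_pos (Or.inl rfl)]
    have hnf : nbr (H ⊔ fromEdgeSet {s(w,v)}) w = insert v (nbr H w) := by
      ext t
      simp only [mem_insert, mem_nbr, adj_addEdge, Sym2.eq, Sym2.rel_iff',
        Prod.mk.injEq, Prod.swap_prod_mk]
      aesop
    rw [ndeg, hnf, card_insert_of_notMem (by rw [mem_nbr]; exact hnadj)]
    rfl
  · by_cases hwv : w = v
    · subst hwv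
      rw [if_pos (Or.inr rfl)]
      have hnf : nbr (H ⊔ fromEdgeSet {s(u,w)}) w = insert u (nbr H w) := by
        ext t
        simp only [mem_insert, mem_nbr, adj_addEdge, Sym2.eq, Sym2.rel_iff',
          Prod.mk.injEq, Prod.swap_prod_mk]
        aesop
      rw [ndeg, hnf, card_insert_of_notMem (by
        rw [mem_nbr]; exact fun h => hnadj h.symm)]
      rfl
    · rw [if_neg (by tauto)]
      have hnf : nbr (H ⊔ fromEdgeSet {s(u,v)}) w = nbr H w := by
        ext t
        simp only [mem_nbr, adj_addEdge, Sym2.eq, Sym2.rel_iff', Prod.mk.injEq,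
          Prod.swap_prod_mk]
        aesop
      rw [ndeg, hnf]
      rfl

lemma ndeg_deleteEdge {H : SimpleGraph V} {a b : V} (hadj : H.Adj a b) (w : V) :
    ndeg (H.deleteEdges {s(a,b)}) w + (if w = a ∨ w = b then 1 else 0) = ndeg H w := by
  have hne : a ≠ b := hadj.ne
  by_cases hw : w = a
  · subst hw
    rw [if_pos (Or.inl rfl)]
    have hnf : nbr (H.deleteEdges {s(w,b)}) w = (nbr H w).erase b := by
      ext t
      simp only [mem_erase, mem_nbr, SimpleGraph.deleteEdges_adj,
        Set.mem_singleton_iff, Sym2.eq, Sym2.rel_iff', Prod.mk.injEq, Prod.swap_prod_mk]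
      aesop
    rw [ndeg, ndeg, hnf, card_erase_of_mem (by rw [mem_nbr]; exact hadj)]
    have : 0 < (nbr H w).card := card_pos.mpr ⟨b, by rw [mem_nbr]; exact hadj⟩
    omega
  · by_cases hwb : w = b
    · subst hwb
      rw [if_pos (Or.inr rfl)]
      have hnf : nbr (H.deleteEdges {s(a,w)}) w = (nbr H w).erase a := by
        ext t
        simp only [mem_erase, mem_nbr, SimpleGraph.deleteEdges_adj,
          Set.mem_singleton_iff, Sym2.eq, Sym2.rel_iff', Prod.mk.injEq, Prod.swap_prod_mk]
        aesop
      rw [ndeg, ndeg, hnf, card_erase_of_mem (by rw [mem_nbr]; exact hadj.symm)]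
      have : 0 < (nbr H w).card :=
        card_pos.mpr ⟨a, by rw [mem_nbr]; exact hadj.symm⟩
      omega
    · rw [if_neg (by tauto)]
      have hnf : nbr (H.deleteEdges {s(a,b)}) w = nbr H w := by
        ext t
        simp only [mem_nbr, SimpleGraph.deleteEdges_adj, Set.mem_singleton_iff,
          Sym2.eq, Sym2.rel_iff', Prod.mk.injEq, Prod.swap_prod_mk]
        aesop
      rw [ndeg, ndeg, hnf]
      omega
lemma count_drop {G2 Gcur : SimpleGraph V} {r : ℕ} {x y : V} (hxy : x ≠ y)
    (hx : ndeg Gcur x = r) (hy : ndeg Gcur y = r)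
    (hiff : ∀ v, ndeg G2 v = r ↔ (ndeg Gcur v = r ∧ v ≠ x ∧ v ≠ y)) :
    (univ.filter (fun v => ndeg G2 v = r)).card + 2 =
      (univ.filter (fun v => ndeg Gcur v = r)).card := by
  have hset : univ.filter (fun v => ndeg G2 v = r) =
      (univ.filter (fun v => ndeg Gcur v = r)) \ {x, y} := by
    ext v
    simp only [mem_filter, mem_univ, true_and, mem_sdiff, mem_insert, mem_singleton, hiff v]
    tauto
  have hsub : ({x, y} : Finset V) ⊆ univ.filter (fun v => ndeg Gcur v = r) := by
    intro v hv
    simp only [mem_insert, mem_singleton] at hv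
    rcases hv with rfl | rfl <;> simp [mem_filter, hx, hy]
  have hcard2 : ({x, y} : Finset V).card = 2 := card_pair hxy
  have hle := card_le_card hsub
  rw [hset, card_sdiff_of_subset hsub, hcard2]
  omega

lemma step {g d r : ℕ} (hg : 3 ≤ g) (hd : 2 ≤ d)
    (hn : 4 * d ^ g ≤ Fintype.card V)
    (G Gcur : SimpleGraph V) (hle : G ≤ Gcur)
    (hGreg : ∀ v, ndeg G v = r) (hrd : r < d)
    (hgirth : GirthGE Gcur g)
    (hdeg : ∀ v, ndeg Gcur v = r ∨ ndeg Gcur v = r + 1)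
    (hU2 : 2 ≤ (univ.filter (fun v => ndeg Gcur v = r)).card) :
    ∃ G2 : SimpleGraph V, G ≤ G2 ∧ GirthGE G2 g ∧
      (∀ v, ndeg G2 v = r ∨ ndeg G2 v = r + 1) ∧
      (univ.filter (fun v => ndeg G2 v = r)).card + 2 =
        (univ.filter (fun v => ndeg Gcur v = r)).card := by
  by_cases hfar : ∃ x ∈ univ.filter (fun v => ndeg Gcur v = r),
      ∃ y ∈ univ.filter (fun v => ndeg Gcur v = r),
      x ≠ y ∧ ∀ p : Gcur.Walk x y, g - 1 ≤ p.length
  · -- Case A : add an edge between two far-apart deficient vertices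
    obtain ⟨x, hx, y, hy, hxy, hfarw⟩ := hfar
    have hxr : ndeg Gcur x = r := (mem_filter.mp hx).2
    have hyr : ndeg Gcur y = r := (mem_filter.mp hy).2
    have hnadj : ¬ Gcur.Adj x y := by
      intro h
      have := hfarw (SimpleGraph.Walk.cons h SimpleGraph.Walk.nil)
      simp only [SimpleGraph.Walk.length_cons, SimpleGraph.Walk.length_nil] at this
      omega
    refine ⟨Gcur ⊔ fromEdgeSet {s(x,y)}, le_trans hle le_sup_left, ?_, ?_, ?_⟩
    · exact girthGE_addEdge hgirth (fun p _ => by have := hfarw p; omega)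
    · intro v
      rw [ndeg_addEdge hxy hnadj v]
      by_cases hv : v = x ∨ v = y
      · rw [if_pos hv]
        rcases hv with rfl | rfl
        · rw [hxr]; exact Or.inr rfl
        · rw [hyr]; exact Or.inr rfl
      · rw [if_neg hv]; exact hdeg v
    · refine count_drop hxy hxr hyr (fun v => ?_)
      rw [ndeg_addEdge hxy hnadj v]
      by_cases hv : v = x ∨ v = y
      · rw [if_pos hv]
        constructor
        · intro h
          exfalso
          rcases hv with rfl | rfl
          · rw [hxr] at h; omega
          · rw [hyr] at h; omega
        · rintro ⟨_, h2, h3⟩; tauto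
      · rw [if_neg hv]
        push_neg at hv
        tauto
  · -- Case B : all deficient vertices are close together; swap an edge
    push_neg at hfar
    obtain ⟨x, hx, y, hy, hxy⟩ := Finset.one_lt_card.mp
      (by omega : 1 < (univ.filter (fun v => ndeg Gcur v = r)).card)
    have hxr : ndeg Gcur x = r := (mem_filter.mp hx).2
    have hyr : ndeg Gcur y = r := (mem_filter.mp hy).2
    have hUball : univ.filter (fun v => ndeg Gcur v = r) ⊆ gball Gcur x (g-2) := by
      intro z hz
      by_cases hzx : z = x
      · subst hzx; exact center_mem_gball _ _ _
      · obtain ⟨p, hp⟩ := hfar x hx z hz (fun h => hzx h.symm)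
        exact end_mem_gball' p (by omega)
    have hdegle : ∀ v, ndeg Gcur v ≤ d := by
      intro v; rcases hdeg v with h | h <;> omega
    have hg1 : (g - 2) + 1 = g - 1 := by omega
    have hballcard : ∀ u0 : V, (gball Gcur u0 (g-2)).card < d ^ (g-1) := by
      intro u0
      have h1 := card_gball_le hdegle u0 (g-2)
      rw [hg1] at h1
      exact lt_of_le_of_lt h1 (geom_lt' hd _)
    have hFcard : (gball Gcur x (g-2) ∪ gball Gcur y (g-2)).card < 2 * d ^ (g-1) := by
      have h0 := card_union_le (gball Gcur x (g-2)) (gball Gcur y (g-2))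
      have h1 := hballcard x
      have h2 := hballcard y
      omega
    have hWU : (univ.filter (fun v => ndeg Gcur v = r + 1)).card +
        (univ.filter (fun v => ndeg Gcur v = r)).card = Fintype.card V := by
      have h1 := card_filter_add_card_filter_not
        (s := univ) (p := fun v => ndeg Gcur v = r + 1)
      have h2 : univ.filter (fun v => ¬ ndeg Gcur v = r + 1) =
          univ.filter (fun v => ndeg Gcur v = r) := by
        ext v
        simp only [mem_filter, mem_univ, true_and]
        rcases hdeg v with h | h <;> constructor <;> intro h3 <;> omega
      rw [h2] at h1
      rw [h1, card_univ]
    have hdg : 2 * d ^ (g-1) ≤ d ^ g := by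
      have h3 : d ^ g = d ^ (g - 1) * d := by
        rw [← pow_succ]
        congr 1
        omega
      nlinarith [pow_pos (by omega : 0 < d) (g-1)]
    have hUcard : (univ.filter (fun v => ndeg Gcur v = r)).card < d ^ (g-1) :=
      lt_of_le_of_lt (card_le_card hUball) (hballcard x)
    have hWbig : 2 * (gball Gcur x (g-2) ∪ gball Gcur y (g-2)).card <
        (univ.filter (fun v => ndeg Gcur v = r + 1)).card := by omega
    -- the partner map
    have hNsub : ∀ w : V, nbr G w ⊆ nbr Gcur w := by
      intro w t ht
      rw [mem_nbr] at ht ⊢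
      exact hle ht
    have hpart : ∀ w ∈ univ.filter (fun v => ndeg Gcur v = r + 1),
        ∃ z, nbr Gcur w \ nbr G w = {z} := by
      intro w hw
      have hwdeg : ndeg Gcur w = r + 1 := (mem_filter.mp hw).2
      apply card_eq_one.mp
      rw [card_sdiff_of_subset (hNsub w)]
      have h2 : ndeg G w = r := hGreg w
      rw [ndeg] at hwdeg h2
      omega
    set φ : V → V := fun w =>
      if h : ∃ z, nbr Gcur w \ nbr G w = {z} then h.choose else w
      with hφdef
    have hφ : ∀ w ∈ univ.filter (fun v => ndeg Gcur v = r + 1),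
        nbr Gcur w \ nbr G w = {φ w} := by
      intro w hw
      have hEx := hpart w hw
      simp only [hφdef, dif_pos hEx]
      exact hEx.choose_spec
    have hφmem : ∀ w ∈ univ.filter (fun v => ndeg Gcur v = r + 1),
        Gcur.Adj w (φ w) ∧ ¬ G.Adj w (φ w) := by
      intro w hw
      have h3 : φ w ∈ nbr Gcur w \ nbr G w := by
        rw [hφ w hw]; exact mem_singleton_self _
      rw [mem_sdiff, mem_nbr, mem_nbr] at h3
      exact h3
    have hφW : ∀ w ∈ univ.filter (fun v => ndeg Gcur v = r + 1),
        φ w ∈ univ.filter (fun v => ndeg Gcur v = r + 1) := by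
      intro w hw
      obtain ⟨hadj, hnadj⟩ := hφmem w hw
      have hwmem : w ∈ nbr Gcur (φ w) \ nbr G (φ w) := by
        rw [mem_sdiff, mem_nbr, mem_nbr]
        exact ⟨hadj.symm, fun h => hnadj h.symm⟩
      have hlt : (nbr G (φ w)).card < (nbr Gcur (φ w)).card := by
        apply card_lt_card
        rw [Finset.ssubset_iff_of_subset (hNsub (φ w))]
        exact ⟨w, (mem_sdiff.mp hwmem).1, (mem_sdiff.mp hwmem).2⟩
      have h2 : ndeg G (φ w) = r := hGreg (φ w)
      simp only [mem_filter, mem_univ, true_and]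
      rw [ndeg] at h2
      rcases hdeg (φ w) with h | h
      · exfalso
        rw [ndeg] at h
        omega
      · exact h
    have hφφ : ∀ w ∈ univ.filter (fun v => ndeg Gcur v = r + 1), φ (φ w) = w := by
      intro w hw
      have hwmem : w ∈ nbr Gcur (φ w) \ nbr G (φ w) := by
        obtain ⟨hadj, hnadj⟩ := hφmem w hw
        rw [mem_sdiff, mem_nbr, mem_nbr]
        exact ⟨hadj.symm, fun h => hnadj h.symm⟩
      have h4 := hφ (φ w) (hφW w hw)
      rw [h4, mem_singleton] at hwmem
      exact hwmem.symm
    -- find a matching edge far from x and y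
    have hex : ∃ a ∈ univ.filter (fun v => ndeg Gcur v = r + 1),
        a ∉ gball Gcur x (g-2) ∪ gball Gcur y (g-2) ∧
        φ a ∉ gball Gcur x (g-2) ∪ gball Gcur y (g-2) := by
      by_contra hcon
      push_neg at hcon
      set W := univ.filter (fun v => ndeg Gcur v = r + 1) with hWdef
      set F := gball Gcur x (g-2) ∪ gball Gcur y (g-2) with hFdef
      have hmap : ∀ a ∈ W \ F, φ a ∈ F := by
        intro a ha
        rw [mem_sdiff] at ha
        exact hcon a ha.1 ha.2
      have hinj : Set.InjOn φ (W \ F : Finset V) := by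
        intro a ha b hb hab
        simp only [coe_sdiff, Set.mem_diff, mem_coe] at ha hb
        have h5 := hφφ a ha.1
        rw [hab, hφφ b hb.1] at h5
        exact h5.symm
      have h1 : (W \ F).card ≤ F.card := card_le_card_of_injOn φ hmap hinj
      have h2 := card_inter_add_card_sdiff W F
      have h3 : (W ∩ F).card ≤ F.card := card_le_card inter_subset_right
      omega
    obtain ⟨a, haW, haF, hbF'⟩ := hex
    obtain ⟨hab, hnab⟩ := hφmem a haW
    have hbW : φ a ∈ univ.filter (fun v => ndeg Gcur v = r + 1) := hφW a haW
    obtain ⟨b, hbdef⟩ : ∃ b, φ a = b := ⟨φ a, rfl⟩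
    rw [hbdef] at hab hnab hbW hbF'
    have hbF : b ∉ gball Gcur x (g-2) ∪ gball Gcur y (g-2) := hbF'
    have hxF : x ∈ gball Gcur x (g-2) ∪ gball Gcur y (g-2) :=
      mem_union_left _ (center_mem_gball _ _ _)
    have hyF : y ∈ gball Gcur x (g-2) ∪ gball Gcur y (g-2) :=
      mem_union_right _ (center_mem_gball _ _ _)
    have hax : a ≠ x := fun h => haF (h ▸ hxF)
    have hay : a ≠ y := fun h => haF (h ▸ hyF)
    have hbx : b ≠ x := fun h => hbF (h ▸ hxF)
    have hby : b ≠ y := fun h => hbF (h ▸ hyF)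
    have habne : a ≠ b := hab.ne
    -- distance facts
    have hwalkxa : ∀ p : Gcur.Walk x a, g - 1 ≤ p.length := by
      intro p
      by_contra hcon
      exact haF (mem_union_left _ (end_mem_gball' p (by omega)))
    have hwalkxb : ∀ p : Gcur.Walk x b, g - 1 ≤ p.length := by
      intro p
      by_contra hcon
      exact hbF (mem_union_left _ (end_mem_gball' p (by omega)))
    have hwalkyb : ∀ p : Gcur.Walk y b, g - 1 ≤ p.length := by
      intro p
      by_contra hcon
      exact hbF (mem_union_right _ (end_mem_gball' p (by omega)))
    have hnadjxa : ¬ Gcur.Adj x a := by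
      intro h
      have := hwalkxa (SimpleGraph.Walk.cons h SimpleGraph.Walk.nil)
      simp only [SimpleGraph.Walk.length_cons, SimpleGraph.Walk.length_nil] at this
      omega
    have hnadjyb : ¬ Gcur.Adj y b := by
      intro h
      have := hwalkyb (SimpleGraph.Walk.cons h SimpleGraph.Walk.nil)
      simp only [SimpleGraph.Walk.length_cons, SimpleGraph.Walk.length_nil] at this
      omega
    -- the swap graphs
    have hHle : Gcur.deleteEdges {s(a,b)} ≤ Gcur := SimpleGraph.deleteEdges_le _
    have hHsub : ∀ {c e : V} (p : (Gcur.deleteEdges {s(a,b)}).Walk c e),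
        ∀ f ∈ p.edges, f ∈ Gcur.edgeSet :=
      fun p f hf => SimpleGraph.edgeSet_mono hHle (p.edges_subset_edgeSet hf)
    have hgirthH : GirthGE (Gcur.deleteEdges {s(a,b)}) g := by
      intro a0 c hc
      have := hgirth (c.transfer Gcur (hHsub c)) (hc.transfer (hHsub c))
      rwa [c.length_transfer] at this
    -- walks avoiding the deleted edge between a and b are long
    have hab_dist : ∀ t : (Gcur.deleteEdges {s(a,b)}).Walk a b, g - 1 ≤ t.length := by
      intro t
      have hP : t.bypass.IsPath := t.bypass_isPath
      have hPnoab : s(a,b) ∉ t.bypass.edges := by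
        intro hmem
        have h6 := t.bypass.edges_subset_edgeSet hmem
        rw [SimpleGraph.edgeSet_deleteEdges] at h6
        exact h6.2 rfl
      have hP'path : (t.bypass.transfer Gcur (hHsub t.bypass)).IsPath := hP.transfer _
      have hP'noab : s(a,b) ∉ (t.bypass.transfer Gcur (hHsub t.bypass)).edges := by
        rw [SimpleGraph.Walk.edges_transfer]
        exact hPnoab
      have hcyc : (SimpleGraph.Walk.cons hab.symm
          (t.bypass.transfer Gcur (hHsub t.bypass))).IsCycle := by
        rw [SimpleGraph.Walk.cons_isCycle_iff]
        refine ⟨hP'path, ?_⟩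
        rw [show s(b,a) = s(a,b) from Sym2.eq_swap]
        exact hP'noab
      have h7 := hgirth _ hcyc
      rw [SimpleGraph.Walk.length_cons] at h7
      have h8 : (t.bypass.transfer Gcur (hHsub t.bypass)).length = t.bypass.length :=
        t.bypass.length_transfer _
      have h9 := t.length_bypass_le
      omega
    have hgirthH2 : GirthGE (Gcur.deleteEdges {s(a,b)} ⊔ fromEdgeSet {s(x,a)}) g := by
      apply girthGE_addEdge hgirthH
      intro p _
      have := hwalkxa (p.transfer Gcur (hHsub p))
      rw [p.length_transfer] at this
      omega
    -- trails from y to b in the intermediate graph are long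
    have hH2trail : ∀ q : (Gcur.deleteEdges {s(a,b)} ⊔ fromEdgeSet {s(x,a)}).Walk y b,
        q.edges.Nodup → g ≤ q.length + 1 := by
      intro q hnodup
      by_cases hxa : s(x,a) ∈ q.edges
      · have hxsup : x ∈ q.support := q.fst_mem_support_of_mem_edges hxa
        have hspec : (q.takeUntil x hxsup).append (q.dropUntil x hxsup) = q :=
          q.take_spec hxsup
        have hlen : (q.takeUntil x hxsup).length + (q.dropUntil x hxsup).length = q.length := by
          have := congr_arg SimpleGraph.Walk.length hspec
          rwa [SimpleGraph.Walk.length_append] at this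
        have hedges : (q.takeUntil x hxsup).edges ++ (q.dropUntil x hxsup).edges = q.edges := by
          have := congr_arg SimpleGraph.Walk.edges hspec
          rwa [SimpleGraph.Walk.edges_append] at this
        have hnd : ((q.takeUntil x hxsup).edges ++ (q.dropUntil x hxsup).edges).Nodup := by
          rw [hedges]; exact hnodup
        rw [List.nodup_append] at hnd
        have hmem : s(x,a) ∈ (q.takeUntil x hxsup).edges ++ (q.dropUntil x hxsup).edges := by
          rw [hedges]; exact hxa
        rw [List.mem_append] at hmem
        rcases hmem with h1 | h2
        · -- the second part x → b avoids the new edge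
          have havoid : s(x,a) ∉ (q.dropUntil x hxsup).edges := fun h => hnd.2.2 _ h1 _ h rfl
          obtain ⟨q2, hq2len, _⟩ := exists_walk_of_avoid _ havoid
          have := hwalkxb (q2.transfer Gcur (hHsub q2))
          rw [q2.length_transfer] at this
          omega
        · -- split the second part at a
          have hasup : a ∈ (q.dropUntil x hxsup).support :=
            (q.dropUntil x hxsup).snd_mem_support_of_mem_edges h2
          have hspec2 : ((q.dropUntil x hxsup).takeUntil a hasup).append
              ((q.dropUntil x hxsup).dropUntil a hasup) = q.dropUntil x hxsup :=
            (q.dropUntil x hxsup).take_spec hasup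
          have hlen2 : ((q.dropUntil x hxsup).takeUntil a hasup).length +
              ((q.dropUntil x hxsup).dropUntil a hasup).length =
              (q.dropUntil x hxsup).length := by
            have := congr_arg SimpleGraph.Walk.length hspec2
            rwa [SimpleGraph.Walk.length_append] at this
          have hedges2 : ((q.dropUntil x hxsup).takeUntil a hasup).edges ++
              ((q.dropUntil x hxsup).dropUntil a hasup).edges =
              (q.dropUntil x hxsup).edges := by
            have := congr_arg SimpleGraph.Walk.edges hspec2
            rwa [SimpleGraph.Walk.edges_append] at this
          have hnd2 : (((q.dropUntil x hxsup).takeUntil a hasup).edges ++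
              ((q.dropUntil x hxsup).dropUntil a hasup).edges).Nodup := by
            rw [hedges2]; exact hnd.2.1
          rw [List.nodup_append] at hnd2
          have hmem2 : s(x,a) ∈ ((q.dropUntil x hxsup).takeUntil a hasup).edges ++
              ((q.dropUntil x hxsup).dropUntil a hasup).edges := by
            rw [hedges2]; exact h2
          rw [List.mem_append] at hmem2
          rcases hmem2 with h3 | h4
          · -- last part a → b avoids new edge : stays in the deleted graph
            have havoid : s(x,a) ∉ ((q.dropUntil x hxsup).dropUntil a hasup).edges :=
              fun h => hnd2.2.2 _ h3 _ h rfl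
            obtain ⟨q2, hq2len, _⟩ := exists_walk_of_avoid _ havoid
            have := hab_dist q2
            omega
          · -- first part x → a avoids new edge
            have havoid : s(x,a) ∉ ((q.dropUntil x hxsup).takeUntil a hasup).edges :=
              fun h => hnd2.2.2 _ h _ h4 rfl
            obtain ⟨q2, hq2len, _⟩ := exists_walk_of_avoid _ havoid
            have := hwalkxa (q2.transfer Gcur (hHsub q2))
            rw [q2.length_transfer] at this
            omega
      · obtain ⟨q2, hq2len, _⟩ := exists_walk_of_avoid _ hxa
        have := hwalkyb (q2.transfer Gcur (hHsub q2))
        rw [q2.length_transfer] at this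
        omega
    have hgirthG2 : GirthGE
        ((Gcur.deleteEdges {s(a,b)} ⊔ fromEdgeSet {s(x,a)}) ⊔ fromEdgeSet {s(y,b)}) g :=
      girthGE_addEdge hgirthH2 hH2trail
    -- G ≤ G2
    have hleG2 : G ≤ (Gcur.deleteEdges {s(a,b)} ⊔ fromEdgeSet {s(x,a)}) ⊔
        fromEdgeSet {s(y,b)} := by
      intro c e hce
      apply le_sup_left (b := fromEdgeSet {s(y,b)})
      apply le_sup_left (b := fromEdgeSet {s(x,a)})
      rw [SimpleGraph.deleteEdges_adj]
      refine ⟨hle hce, ?_⟩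
      intro hmem
      rw [Set.mem_singleton_iff, Sym2.eq_iff] at hmem
      rcases hmem with ⟨rfl, rfl⟩ | ⟨rfl, rfl⟩
      · exact hnab hce
      · exact hnab hce.symm
    -- degrees
    have hnadjHxa : ¬ (Gcur.deleteEdges {s(a,b)}).Adj x a := fun h => hnadjxa (hHle h)
    have hnadjH2yb : ¬ (Gcur.deleteEdges {s(a,b)} ⊔ fromEdgeSet {s(x,a)}).Adj y b := by
      rw [adj_addEdge]
      rintro (h | ⟨h1, h2⟩)
      · exact hnadjyb (hHle h)
      · rw [Sym2.eq_iff] at h1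
        rcases h1 with ⟨rfl, rfl⟩ | ⟨rfl, rfl⟩
        · exact hxy rfl
        · exact hay rfl
    have har : ndeg Gcur a = r + 1 := (mem_filter.mp haW).2
    have hbr : ndeg Gcur b = r + 1 := (mem_filter.mp hbW).2
    have hdegall : ∀ v : V,
        ndeg ((Gcur.deleteEdges {s(a,b)} ⊔ fromEdgeSet {s(x,a)}) ⊔ fromEdgeSet {s(y,b)}) v =
          if v = x ∨ v = y ∨ v = a ∨ v = b then r + 1 else ndeg Gcur v := by
      intro v
      have e1 := ndeg_deleteEdge hab v
      have e2 := ndeg_addEdge (fun h => hax h.symm) hnadjHxa v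
      have e3 := ndeg_addEdge (fun h => hby h.symm) hnadjH2yb v
      by_cases hvx : v = x
      · subst hvx
        rw [if_pos (Or.inl rfl)]
        rw [if_neg (by tauto)] at e1
        rw [if_pos (Or.inl rfl)] at e2
        rw [if_neg (by tauto)] at e3
        omega
      · by_cases hvy : v = y
        · subst hvy
          rw [if_pos (Or.inr (Or.inl rfl))]
          rw [if_neg (by tauto)] at e1
          rw [if_neg (by tauto)] at e2
          rw [if_pos (Or.inl rfl)] at e3
          omega
        · by_cases hva : v = a
          · subst hva
            rw [if_pos (Or.inr (Or.inr (Or.inl rfl)))]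
            rw [if_pos (Or.inl rfl)] at e1
            rw [if_pos (Or.inr rfl)] at e2
            rw [if_neg (by tauto)] at e3
            omega
          · by_cases hvb : v = b
            · subst hvb
              rw [if_pos (Or.inr (Or.inr (Or.inr rfl)))]
              rw [if_pos (Or.inr rfl)] at e1
              rw [if_neg (by tauto)] at e2
              rw [if_pos (Or.inr rfl)] at e3
              omega
            · rw [if_neg (by tauto)]
              rw [if_neg (by tauto)] at e1
              rw [if_neg (by tauto)] at e2
              rw [if_neg (by tauto)] at e3
              omega
    refine ⟨(Gcur.deleteEdges {s(a,b)} ⊔ fromEdgeSet {s(x,a)}) ⊔ fromEdgeSet {s(y,b)},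
      hleG2, hgirthG2, ?_, ?_⟩
    · intro v
      rw [hdegall v]
      by_cases hv : v = x ∨ v = y ∨ v = a ∨ v = b
      · rw [if_pos hv]; exact Or.inr rfl
      · rw [if_neg hv]; exact hdeg v
    · refine count_drop hxy hxr hyr (fun v => ?_)
      rw [hdegall v]
      by_cases hv : v = x ∨ v = y ∨ v = a ∨ v = b
      · rw [if_pos hv]
        constructor
        · intro h; omega
        · rintro ⟨h1, h2, h3⟩
          rcases hv with rfl | rfl | rfl | rfl
          · exact absurd rfl h2
          · exact absurd rfl h3
          · omega
          · omega
      · rw [if_neg hv]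
        push_neg at hv
        tauto
lemma fill {g d r : ℕ} (hg : 3 ≤ g) (hd : 2 ≤ d)
    (hn : 4 * d ^ g ≤ Fintype.card V) (heven : Even (Fintype.card V))
    (G : SimpleGraph V) (hGreg : ∀ v, ndeg G v = r) (hrd : r < d) :
    ∀ k (Gcur : SimpleGraph V), G ≤ Gcur → GirthGE Gcur g →
      (∀ v, ndeg Gcur v = r ∨ ndeg Gcur v = r + 1) →
      (univ.filter (fun v => ndeg Gcur v = r)).card = k →
      ∃ G2 : SimpleGraph V, GirthGE G2 g ∧ ∀ v, ndeg G2 v = r + 1 := by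
  intro k
  induction k using Nat.strong_induction_on with
  | _ k ih =>
    intro Gcur hle hgirth hdeg hcard
    rcases Nat.eq_zero_or_pos k with h0 | h0
    · refine ⟨Gcur, hgirth, fun v => ?_⟩
      rcases hdeg v with h | h
      · exfalso
        have hvmem : v ∈ univ.filter (fun v => ndeg Gcur v = r) := by
          simp only [mem_filter, mem_univ, true_and]; exact h
        have : univ.filter (fun v => ndeg Gcur v = r) = ∅ :=
          card_eq_zero.mp (by omega)
        rw [this] at hvmem
        exact absurd hvmem (notMem_empty v)
      · exact h
    · -- parity : k is even, hence ≥ 2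
      have hsum : ∀ v, ndeg Gcur v + (if ndeg Gcur v = r then 1 else 0) = r + 1 := by
        intro v
        rcases hdeg v with h | h
        · rw [h, if_pos rfl]
        · rw [h, if_neg (by omega)]
      have key : ∑ v : V, (ndeg Gcur v + if ndeg Gcur v = r then 1 else 0) =
          Fintype.card V * (r+1) := by
        rw [Finset.sum_congr rfl (fun v _ => hsum v), Finset.sum_const, card_univ,
          smul_eq_mul]
      rw [Finset.sum_add_distrib] at key
      have key3 : ∑ v : V, (if ndeg Gcur v = r then 1 else 0) = k := by
        rw [← Finset.card_filter]
        exact hcard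
      rw [key3] at key
      have h2E : ∑ v : V, ndeg Gcur v = 2 * Gcur.edgeFinset.card := by
        have hhs := SimpleGraph.sum_degrees_eq_twice_card_edges Gcur
        rw [Finset.sum_congr rfl (fun v _ => (ndeg_eq_degree Gcur v))] at hhs
        exact hhs
      obtain ⟨t, ht⟩ : Even (Fintype.card V * (r+1)) := heven.mul_right _
      have hk2 : 2 ≤ k := by omega
      obtain ⟨G2, hle2, hg2, hdeg2, hc2⟩ :=
        step hg hd hn G Gcur hle hGreg hrd hgirth hdeg (by omega)
      exact ih (k-2) (by omega) G2 hle2 hg2 hdeg2 (by omega)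

lemma buildup {g d : ℕ} (hg : 3 ≤ g) (hd : 2 ≤ d)
    (hn : 4 * d ^ g ≤ Fintype.card V) (heven : Even (Fintype.card V)) :
    ∀ r, r ≤ d → ∃ G : SimpleGraph V, GirthGE G g ∧ ∀ v, ndeg G v = r := by
  intro r
  induction r with
  | zero =>
    intro _
    refine ⟨⊥, ?_, fun v => ?_⟩
    · intro a c hc
      cases c with
      | nil =>
        have := hc.three_le_length
        simp only [SimpleGraph.Walk.length_nil] at this
        omega
      | cons h q => exact absurd h (by simp)
    · simp [ndeg, nbr]
  | succ r ihr =>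
    intro hrd
    obtain ⟨G, hgirth, hreg⟩ := ihr (by omega)
    exact fill hg hd hn heven G hreg (by omega) _ G le_rfl hgirth
      (fun v => Or.inl (hreg v)) rfl

end ErdosSachsConstruction

/-- (Erdős–Sachs) For any integers `g ≥ 3`, `d ≥ 2` and any even integer `n ≥ 4·d^g`,
there exists an `n`-vertex `d`-regular graph with girth at least `g`. -/
theorem exists_regular_graph_of_large_girth (g d n : ℕ) (hg : 3 ≤ g) (hd : 2 ≤ d)
    (hn : 4 * d ^ g ≤ n) (heven : Even n) :
    ∃ G : SimpleGraph (Fin n), ∃ _ : DecidableRel G.Adj,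
      G.IsRegularOfDegree d ∧ (g : ℕ∞) ≤ G.egirth := by
  have hcard : Fintype.card (Fin n) = n := Fintype.card_fin n
  obtain ⟨G, hgirth, hreg⟩ := buildup (V := Fin n) hg hd
    (by rw [hcard]; exact hn) (by rw [hcard]; exact heven) d le_rfl
  refine ⟨G, Classical.decRel _, fun v => ?_, ?_⟩
  · letI : DecidableRel G.Adj := Classical.decRel _
    exact (ndeg_eq_degree G v).trans (hreg v)
  · rw [SimpleGraph.le_egirth]
    intro a w hw
    exact_mod_cast hgirth w hw
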